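/- Let α > 1 be a real number. The map π from the set of sequences of positive integers to (0,1] defined by π((d_i)) = ⟨d_i⟩_α is injective: if two sequences (d_i) and (g_i) of positive integers satisfy ⟨d_i⟩_α = ⟨g_i⟩_α, then d_i = g_i for all i. -/

import Mathlib

/-- The α-expansion value ⟨d_i⟩_α = ∑_{i=1}^∞ (α-1)^{i-1} α^{-(d_1+⋯+d_i)},
with the digit sequence `d : ℕ → ℕ` indexed from 0 (so `d 0` is the first digit). -/
noncomputable def alphaExpansion (α : ℝ) (d : ℕ → ℕ) : ℝ :=
  ∑' i : ℕ, (α - 1) ^ i * α ^ (-((∑ j ∈ Finset.range (i + 1), d j : ℕ) : ℤ))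

namespace AlphaAux

variable {α : ℝ}

lemma term_le (hα : 1 < α) (d : ℕ → ℕ) (hd : ∀ i, 1 ≤ d i) (i : ℕ) :
    (α - 1) ^ i * α ^ (-((∑ j ∈ Finset.range (i + 1), d j : ℕ) : ℤ))
      ≤ α⁻¹ * ((α - 1) / α) ^ i := by
  have hα0 : (0:ℝ) < α := one_pos.trans hα
  have hα1 : (0:ℝ) < α - 1 := by linarith
  have hS : (i + 1 : ℤ) ≤ ((∑ j ∈ Finset.range (i + 1), d j : ℕ) : ℤ) := by
    have : i + 1 ≤ ∑ j ∈ Finset.range (i + 1), d j := by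
      calc i + 1 = ∑ _j ∈ Finset.range (i + 1), 1 := by simp
        _ ≤ _ := Finset.sum_le_sum fun j _ => hd j
    exact_mod_cast this
  have h1 : α ^ (-((∑ j ∈ Finset.range (i + 1), d j : ℕ) : ℤ)) ≤ α ^ (-(i + 1 : ℤ)) :=
    zpow_le_zpow_right₀ hα.le (by omega)
  have h2 : α ^ (-(i + 1 : ℤ)) = α⁻¹ * (α⁻¹) ^ i := by
    rw [zpow_neg, show ((i : ℤ) + 1) = ((i + 1 : ℕ) : ℤ) by push_cast; ring, zpow_natCast,
      pow_succ, mul_inv, inv_pow]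
    ring
  calc (α - 1) ^ i * α ^ (-((∑ j ∈ Finset.range (i + 1), d j : ℕ) : ℤ))
      ≤ (α - 1) ^ i * α ^ (-(i + 1 : ℤ)) := by
        exact mul_le_mul_of_nonneg_left h1 (by positivity)
    _ = α⁻¹ * ((α - 1) / α) ^ i := by
        rw [h2, div_eq_mul_inv, mul_pow]; ring

lemma ratio_nonneg (hα : 1 < α) : (0:ℝ) ≤ (α - 1) / α :=
  div_nonneg (by linarith) (by linarith)

lemma ratio_lt_one (hα : 1 < α) : (α - 1) / α < 1 :=
  (div_lt_one (by linarith)).mpr (by linarith)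

lemma summable_majorant (hα : 1 < α) :
    Summable (fun i : ℕ => α⁻¹ * ((α - 1) / α) ^ i) :=
  (summable_geometric_of_lt_one (ratio_nonneg hα) (ratio_lt_one hα)).mul_left _

lemma summable_term (hα : 1 < α) (d : ℕ → ℕ) (hd : ∀ i, 1 ≤ d i) :
    Summable (fun i : ℕ =>
      (α - 1) ^ i * α ^ (-((∑ j ∈ Finset.range (i + 1), d j : ℕ) : ℤ))) := by
  have hα0 : (0:ℝ) < α := one_pos.trans hα
  have hα1 : (0:ℝ) < α - 1 := by linarith
  exact Summable.of_nonneg_of_le (fun i => by positivity) (term_le hα d hd)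
    (summable_majorant hα)

lemma pos (hα : 1 < α) (d : ℕ → ℕ) (hd : ∀ i, 1 ≤ d i) :
    0 < alphaExpansion α d := by
  have hα0 : (0:ℝ) < α := one_pos.trans hα
  have hα1 : (0:ℝ) < α - 1 := by linarith
  exact Summable.tsum_pos (summable_term hα d hd) (fun i => by positivity) 0 (by positivity)

lemma le_one (hα : 1 < α) (d : ℕ → ℕ) (hd : ∀ i, 1 ≤ d i) :
    alphaExpansion α d ≤ 1 := by
  have hα0 : (0:ℝ) < α := one_pos.trans hα
  have h := Summable.tsum_le_tsum (term_le hα d hd) (summable_term hα d hd) (summable_majorant hα)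
  have hmaj : ∑' i : ℕ, α⁻¹ * ((α - 1) / α) ^ i = 1 := by
    rw [tsum_mul_left, tsum_geometric_of_lt_one (ratio_nonneg hα) (ratio_lt_one hα)]
    have : 1 - (α - 1) / α = α⁻¹ := by field_simp; ring
    rw [this, inv_inv]
    field_simp
  calc alphaExpansion α d ≤ _ := h
    _ = 1 := hmaj

lemma rec_formula (hα : 1 < α) (d : ℕ → ℕ) (hd : ∀ i, 1 ≤ d i) :
    alphaExpansion α d
      = α ^ (-(d 0 : ℤ)) * (1 + (α - 1) * alphaExpansion α (fun i => d (i + 1))) := by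
  have hα0 : (0:ℝ) < α := one_pos.trans hα
  have hsum := summable_term hα d hd
  rw [alphaExpansion, Summable.tsum_eq_zero_add hsum]
  have h0 : (α - 1) ^ 0 * α ^ (-((∑ j ∈ Finset.range (0 + 1), d j : ℕ) : ℤ))
      = α ^ (-(d 0 : ℤ)) := by simp
  have hterm : ∀ n : ℕ,
      (α - 1) ^ (n + 1) * α ^ (-((∑ j ∈ Finset.range (n + 1 + 1), d j : ℕ) : ℤ))
      = (α ^ (-(d 0 : ℤ)) * (α - 1)) *
        ((α - 1) ^ n * α ^ (-((∑ j ∈ Finset.range (n + 1), d (j + 1) : ℕ) : ℤ))) := by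
    intro n
    have hsplit : (∑ j ∈ Finset.range (n + 1 + 1), d j)
        = (∑ j ∈ Finset.range (n + 1), d (j + 1)) + d 0 := Finset.sum_range_succ' d (n + 1)
    rw [hsplit]
    have : (-((((∑ j ∈ Finset.range (n + 1), d (j + 1)) + d 0 : ℕ)) : ℤ))
        = (-((∑ j ∈ Finset.range (n + 1), d (j + 1) : ℕ) : ℤ)) + (-(d 0 : ℤ)) := by
      push_cast; ring
    rw [this, zpow_add₀ (ne_of_gt hα0), pow_succ]
    ring
  rw [tsum_congr hterm, tsum_mul_left, h0, alphaExpansion]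
  ring

lemma bounds (hα : 1 < α) (d : ℕ → ℕ) (hd : ∀ i, 1 ≤ d i) :
    α ^ (-(d 0 : ℤ)) < alphaExpansion α d ∧ alphaExpansion α d ≤ α ^ (1 - (d 0 : ℤ)) := by
  have hα0 : (0:ℝ) < α := one_pos.trans hα
  have hα1 : (0:ℝ) < α - 1 := by linarith
  have hpow : (0:ℝ) < α ^ (-(d 0 : ℤ)) := zpow_pos hα0 _
  have hpos := pos hα (fun i => d (i + 1)) (fun i => hd (i + 1))
  have hle := le_one hα (fun i => d (i + 1)) (fun i => hd (i + 1))
  rw [rec_formula hα d hd]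
  constructor
  · nlinarith [mul_pos hpow (mul_pos hα1 hpos)]
  · have h1 : 1 + (α - 1) * alphaExpansion α (fun i => d (i + 1)) ≤ α := by nlinarith
    have : α ^ (1 - (d 0 : ℤ)) = α ^ (-(d 0 : ℤ)) * α := by
      rw [sub_eq_add_neg, add_comm, zpow_add₀ (ne_of_gt hα0), zpow_one]
    rw [this]
    exact mul_le_mul_of_nonneg_left h1 hpow.le

lemma head_eq (hα : 1 < α) (d g : ℕ → ℕ) (hd : ∀ i, 1 ≤ d i) (hg : ∀ i, 1 ≤ g i)
    (h : alphaExpansion α d = alphaExpansion α g) : d 0 = g 0 := by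
  obtain ⟨hd1, hd2⟩ := bounds hα d hd
  obtain ⟨hg1, hg2⟩ := bounds hα g hg
  rw [h] at hd1 hd2
  have h1 : α ^ (-(d 0 : ℤ)) < α ^ (1 - (g 0 : ℤ)) := lt_of_lt_of_le hd1 hg2
  have h2 : α ^ (-(g 0 : ℤ)) < α ^ (1 - (d 0 : ℤ)) := lt_of_lt_of_le hg1 hd2
  have e1 : (-(d 0 : ℤ)) < 1 - (g 0 : ℤ) := (zpow_lt_zpow_iff_right₀ hα).mp h1
  have e2 : (-(g 0 : ℤ)) < 1 - (d 0 : ℤ) := (zpow_lt_zpow_iff_right₀ hα).mp h2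
  omega

lemma tail_eq (hα : 1 < α) (d g : ℕ → ℕ) (hd : ∀ i, 1 ≤ d i) (hg : ∀ i, 1 ≤ g i)
    (h : alphaExpansion α d = alphaExpansion α g) :
    alphaExpansion α (fun i => d (i + 1)) = alphaExpansion α (fun i => g (i + 1)) := by
  have hα0 : (0:ℝ) < α := one_pos.trans hα
  have h0 := head_eq hα d g hd hg h
  rw [rec_formula hα d hd, rec_formula hα g hg, h0] at h
  have hpow : α ^ (-(g 0 : ℤ)) ≠ 0 := ne_of_gt (zpow_pos hα0 _)
  have := mul_left_cancel₀ hpow h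
  have hα1 : α - 1 ≠ 0 := by intro hc; linarith [hc]
  field_simp at this
  exact mul_left_cancel₀ hα1 (by linarith)

end AlphaAux

theorem alphaExpansion_injective (α : ℝ) (hα : 1 < α)
    (d g : ℕ → ℕ) (hd : ∀ i, 1 ≤ d i) (hg : ∀ i, 1 ≤ g i)
    (h : alphaExpansion α d = alphaExpansion α g) :
    ∀ i, d i = g i := by
  intro i
  induction i generalizing d g with
  | zero => exact AlphaAux.head_eq hα d g hd hg h
  | succ n ih =>
    exact ih (fun j => d (j + 1)) (fun j => g (j + 1)) (fun j => hd (j + 1))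
      (fun j => hg (j + 1)) (AlphaAux.tail_eq hα d g hd hg h)
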